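/- Let T₂ = [[1,−2,−2],[0,1,2],[0,0,1]], T_{i√2} = [[1,i√2,−1],[0,1,i√2],[0,0,1]], T_{2√2} = [[1,0,i√2],[0,1,0],[0,0,1]], and R = diag(1,−1,1), viewed as elements of GL(3,ℂ). Then every element γ of the subgroup of GL(3,ℂ) generated by {T₂, T_{i√2}, T_{2√2}, R} can be written as γ = R^p · T_{2√2}^n · T₂^m · T_{i√2}^l for some integers m, n, l and some p ∈ {0,1}. -/

import Mathlib

open Matrix

theorem aux_conj_cusp {G : Type*} [Group G] {a b z : G}
    (hzb : Commute z b) (h : b * a * b⁻¹ = z * a) :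
    ∀ l : ℤ, b ^ l * a * (b ^ l)⁻¹ = z ^ l * a := by
  have hba : b * a = z * (a * b) := by
    have e : b * a = b * a * b⁻¹ * b := by group
    rw [e, h]; group
  have hab : a * b = z⁻¹ * (b * a) := by rw [hba]; group
  have hinv : b⁻¹ * a * b⁻¹⁻¹ = z⁻¹ * a := by
    calc b⁻¹ * a * b⁻¹⁻¹ = b⁻¹ * (a * b) := by group
      _ = b⁻¹ * (z⁻¹ * (b * a)) := by rw [hab]
      _ = b⁻¹ * z⁻¹ * b * a := by group
      _ = z⁻¹ * b⁻¹ * b * a := by rw [← hzb.inv_inv.eq]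
      _ = z⁻¹ * a := by group
  intro l
  induction l using Int.induction_on with
  | zero => simp
  | succ k ih =>
      have hzk : b ^ (k:ℤ) * z * (b ^ (k:ℤ))⁻¹ = z := by
        rw [(hzb.zpow_right (k:ℤ)).symm.eq]; group
      calc b ^ ((k:ℤ)+1) * a * (b ^ ((k:ℤ)+1))⁻¹
          = b ^ (k:ℤ) * (b * a * b⁻¹) * (b ^ (k:ℤ))⁻¹ := by
            rw [_root_.zpow_add_one]; group
        _ = b ^ (k:ℤ) * (z * a) * (b ^ (k:ℤ))⁻¹ := by rw [h]
        _ = (b ^ (k:ℤ) * z * (b ^ (k:ℤ))⁻¹) * (b ^ (k:ℤ) * a * (b ^ (k:ℤ))⁻¹) := by group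
        _ = z * (z ^ (k:ℤ) * a) := by rw [hzk, ih]
        _ = z ^ ((k:ℤ)+1) * a := by rw [_root_.zpow_add_one]; group
  | pred k ih =>
      have hzk : b ^ (-(k:ℤ)) * z⁻¹ * (b ^ (-(k:ℤ)))⁻¹ = z⁻¹ := by
        rw [(hzb.inv_left.zpow_right (-(k:ℤ))).symm.eq]; group
      calc b ^ (-(k:ℤ)-1) * a * (b ^ (-(k:ℤ)-1))⁻¹
          = b ^ (-(k:ℤ)) * (b⁻¹ * a * b⁻¹⁻¹) * (b ^ (-(k:ℤ)))⁻¹ := by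
            rw [_root_.zpow_sub_one]; group
        _ = b ^ (-(k:ℤ)) * (z⁻¹ * a) * (b ^ (-(k:ℤ)))⁻¹ := by rw [hinv]
        _ = (b ^ (-(k:ℤ)) * z⁻¹ * (b ^ (-(k:ℤ)))⁻¹) * (b ^ (-(k:ℤ)) * a * (b ^ (-(k:ℤ)))⁻¹) := by
            group
        _ = z⁻¹ * (z ^ (-(k:ℤ)) * a) := by rw [hzk, ih]
        _ = z ^ (-(k:ℤ)-1) * a := by rw [_root_.zpow_sub_one]; group

theorem aux_swap_cusp {G : Type*} [Group G] {a b z : G}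
    (hza : Commute z a) (hzb : Commute z b) (h : b * a * b⁻¹ = z * a) :
    ∀ l m : ℤ, b ^ l * a ^ m = z ^ (m * l) * (a ^ m * b ^ l) := by
  intro l m
  have h1 : b ^ l * a ^ m * (b ^ l)⁻¹ = (b ^ l * a * (b ^ l)⁻¹) ^ m := by
    have := map_zpow (MulAut.conj (b ^ l)) a m
    simpa [MulAut.conj_apply] using this
  rw [aux_conj_cusp hzb h l] at h1
  have h2 : (z ^ l * a) ^ m = (z ^ l) ^ m * a ^ m := (hza.zpow_left l).mul_zpow m
  have h3 : b ^ l * a ^ m = (z ^ l) ^ m * a ^ m * b ^ l := by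
    rw [← h2, ← h1]; group
  rw [h3, ← _root_.zpow_mul, mul_comm l m]; group

theorem normal_form_cusp_stabilizer_d2
    (T₂ Ti Tv R : GL (Fin 3) ℂ)
    (hT₂ : (T₂ : Matrix (Fin 3) (Fin 3) ℂ) = !![1, -2, -2; 0, 1, 2; 0, 0, 1])
    (hTi : (Ti : Matrix (Fin 3) (Fin 3) ℂ) =
      !![1, Complex.I * (Real.sqrt 2 : ℂ), -1;
         0, 1, Complex.I * (Real.sqrt 2 : ℂ);
         0, 0, 1])
    (hTv : (Tv : Matrix (Fin 3) (Fin 3) ℂ) =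
      !![1, 0, Complex.I * (Real.sqrt 2 : ℂ); 0, 1, 0; 0, 0, 1])
    (hR : (R : Matrix (Fin 3) (Fin 3) ℂ) = !![1, 0, 0; 0, -1, 0; 0, 0, 1])
    (γ : GL (Fin 3) ℂ) (hγ : γ ∈ Subgroup.closure {T₂, Ti, Tv, R}) :
    ∃ (m n l : ℤ) (p : ℕ), p ≤ 1 ∧ γ = R ^ p * Tv ^ n * T₂ ^ m * Ti ^ l := by
  have hs2 : ((Real.sqrt 2 : ℝ) : ℂ) ^ 2 = 2 := by
    rw [sq]; norm_cast; rw [Real.mul_self_sqrt (by norm_num)]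
  -- basic relations at the matrix level
  have e1 : R * R = 1 := by
    apply Units.ext
    push_cast [hR]
    simp only [Matrix.mul_fin_three, Matrix.one_fin_three]
    norm_num [funext_iff, Fin.forall_fin_succ]
    all_goals (try ring_nf)
    all_goals (try simp [Complex.I_sq, hs2])
    all_goals (try ring)
  have e2 : R * T₂ * R * T₂ = 1 := by
    apply Units.ext
    push_cast [hR, hT₂]
    simp only [Matrix.mul_fin_three, Matrix.one_fin_three]
    norm_num [funext_iff, Fin.forall_fin_succ]
    all_goals (try ring_nf)
    all_goals (try simp [Complex.I_sq, hs2])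
    all_goals (try ring)
  have e3 : R * Ti * R * Ti = 1 := by
    apply Units.ext
    push_cast [hR, hTi]
    simp only [Matrix.mul_fin_three, Matrix.one_fin_three]
    norm_num [funext_iff, Fin.forall_fin_succ]
    all_goals (try ring_nf)
    all_goals (try simp [Complex.I_sq, hs2])
    all_goals (try ring)
  have e4 : Tv * T₂ = T₂ * Tv := by
    apply Units.ext
    push_cast [hTv, hT₂]
    simp only [Matrix.mul_fin_three]
    norm_num [funext_iff, Fin.forall_fin_succ]
    all_goals (try ring_nf)
    all_goals (try simp [Complex.I_sq, hs2])
    all_goals (try ring)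
  have e5 : Tv * Ti = Ti * Tv := by
    apply Units.ext
    push_cast [hTv, hTi]
    simp only [Matrix.mul_fin_three]
    norm_num [funext_iff, Fin.forall_fin_succ]
    all_goals (try ring_nf)
    all_goals (try simp [Complex.I_sq, hs2])
    all_goals (try ring)
  have e6 : Tv * R = R * Tv := by
    apply Units.ext
    push_cast [hTv, hR]
    simp only [Matrix.mul_fin_three]
    norm_num [funext_iff, Fin.forall_fin_succ]
    all_goals (try ring_nf)
    all_goals (try simp [Complex.I_sq, hs2])
    all_goals (try ring)
  have e7 : Ti * T₂ = (Tv * Tv * Tv * Tv) * (T₂ * Ti) := by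
    apply Units.ext
    push_cast [hTv, hTi, hT₂]
    simp only [Matrix.mul_fin_three]
    norm_num [funext_iff, Fin.forall_fin_succ]
    all_goals (try ring_nf)
    all_goals (try simp [Complex.I_sq, hs2])
    all_goals (try ring)
  -- derived group-theoretic facts
  have Rinv : R⁻¹ = R := by
    have := inv_eq_of_mul_eq_one_right e1
    rw [this]
  have cVT : Commute Tv T₂ := e4
  have cVI : Commute Tv Ti := e5
  have cVR : Commute Tv R := e6
  have hz4 : Tv ^ (4:ℤ) = Tv * Tv * Tv * Tv := by
    rw [show (4:ℤ) = ((4:ℕ):ℤ) by norm_num, zpow_natCast]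
    rw [pow_succ, pow_succ, pow_succ, pow_one]
  have cz2 : Commute (Tv ^ (4:ℤ)) T₂ := cVT.zpow_left 4
  have czi : Commute (Tv ^ (4:ℤ)) Ti := cVI.zpow_left 4
  have h7 : Ti * T₂ * Ti⁻¹ = Tv ^ (4:ℤ) * T₂ := by
    rw [hz4]
    calc Ti * T₂ * Ti⁻¹ = (Ti * T₂) * Ti⁻¹ := by group
      _ = ((Tv * Tv * Tv * Tv) * (T₂ * Ti)) * Ti⁻¹ := by rw [e7]
      _ = Tv * Tv * Tv * Tv * T₂ := by group
  have swap : ∀ l m : ℤ, Ti ^ l * T₂ ^ m = Tv ^ (4 * (m * l)) * (T₂ ^ m * Ti ^ l) := by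
    intro l m
    have := aux_swap_cusp cz2 czi h7 l m
    rw [← _root_.zpow_mul] at this
    exact this
  have sVT : ∀ n m : ℤ, T₂ ^ m * Tv ^ n = Tv ^ n * T₂ ^ m := fun n m =>
    ((cVT.zpow_zpow n m).eq).symm
  have sVI : ∀ n l : ℤ, Ti ^ l * Tv ^ n = Tv ^ n * Ti ^ l := fun n l =>
    ((cVI.zpow_zpow n l).eq).symm
  have sVR : ∀ n : ℤ, Tv ^ n * R = R * Tv ^ n := fun n => (cVR.zpow_left n).eq
  -- R-conjugation of powers
  have hRT2 : ∀ m : ℤ, R * T₂ ^ m = T₂ ^ (-m) * R := by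
    intro m
    have hc : R * T₂ * R⁻¹ = T₂⁻¹ := by
      rw [Rinv]
      exact eq_inv_of_mul_eq_one_left e2
    have h1 : R * T₂ ^ m * R⁻¹ = (R * T₂ * R⁻¹) ^ m := by
      have := map_zpow (MulAut.conj R) T₂ m
      simpa [MulAut.conj_apply] using this
    rw [hc] at h1
    have : R * T₂ ^ m * R⁻¹ = T₂ ^ (-m) := by rw [h1]; group
    rw [Rinv] at this
    calc R * T₂ ^ m = (R * T₂ ^ m * R) * R⁻¹ := by group
      _ = T₂ ^ (-m) * R⁻¹ := by rw [this]
      _ = T₂ ^ (-m) * R := by rw [Rinv]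
  have hRTI : ∀ l : ℤ, R * Ti ^ l = Ti ^ (-l) * R := by
    intro l
    have hc : R * Ti * R⁻¹ = Ti⁻¹ := by
      rw [Rinv]
      exact eq_inv_of_mul_eq_one_left e3
    have h1 : R * Ti ^ l * R⁻¹ = (R * Ti * R⁻¹) ^ l := by
      have := map_zpow (MulAut.conj R) Ti l
      simpa [MulAut.conj_apply] using this
    rw [hc] at h1
    have : R * Ti ^ l * R⁻¹ = Ti ^ (-l) := by rw [h1]; group
    rw [Rinv] at this
    calc R * Ti ^ l = (R * Ti ^ l * R) * R⁻¹ := by group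
      _ = Ti ^ (-l) * R⁻¹ := by rw [this]
      _ = Ti ^ (-l) * R := by rw [Rinv]
  -- combination of two R-free normal forms
  have combine : ∀ n m l n' m' l' : ℤ,
      (Tv ^ n * T₂ ^ m * Ti ^ l) * (Tv ^ n' * T₂ ^ m' * Ti ^ l') =
        Tv ^ (n + n' + 4 * (m' * l)) * T₂ ^ (m + m') * Ti ^ (l + l') := by
    intro n m l n' m' l'
    calc (Tv ^ n * T₂ ^ m * Ti ^ l) * (Tv ^ n' * T₂ ^ m' * Ti ^ l')
        = Tv ^ n * T₂ ^ m * (Ti ^ l * Tv ^ n') * (T₂ ^ m' * Ti ^ l') := by group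
      _ = Tv ^ n * T₂ ^ m * (Tv ^ n' * Ti ^ l) * (T₂ ^ m' * Ti ^ l') := by rw [sVI n' l]
      _ = Tv ^ n * (T₂ ^ m * Tv ^ n') * ((Ti ^ l * T₂ ^ m') * Ti ^ l') := by group
      _ = Tv ^ n * (Tv ^ n' * T₂ ^ m) *
            ((Tv ^ (4 * (m' * l)) * (T₂ ^ m' * Ti ^ l)) * Ti ^ l') := by
          rw [sVT n' m, swap l m']
      _ = Tv ^ n * Tv ^ n' * (T₂ ^ m * Tv ^ (4 * (m' * l))) *
            (T₂ ^ m' * (Ti ^ l * Ti ^ l')) := by group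
      _ = Tv ^ n * Tv ^ n' * (Tv ^ (4 * (m' * l)) * T₂ ^ m) *
            (T₂ ^ m' * (Ti ^ l * Ti ^ l')) := by rw [sVT (4 * (m' * l)) m]
      _ = Tv ^ (n + n' + 4 * (m' * l)) * T₂ ^ (m + m') * Ti ^ (l + l') := by
          rw [_root_.zpow_add Tv (n + n') (4 * (m' * l)), _root_.zpow_add Tv n n',
            _root_.zpow_add T₂ m m', _root_.zpow_add Ti l l']
          group
  -- moving R across an R-free normal form
  have moveR : ∀ n m l : ℤ,
      Tv ^ n * T₂ ^ m * Ti ^ l * R = R * (Tv ^ n * T₂ ^ (-m) * Ti ^ (-l)) := by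
    intro n m l
    have h1 : Ti ^ l * R = R * Ti ^ (-l) := by
      rw [hRTI (-l)]; group
    have h2 : T₂ ^ m * R = R * T₂ ^ (-m) := by
      rw [hRT2 (-m)]; group
    calc Tv ^ n * T₂ ^ m * Ti ^ l * R = Tv ^ n * T₂ ^ m * (Ti ^ l * R) := by group
      _ = Tv ^ n * (T₂ ^ m * R) * Ti ^ (-l) := by rw [h1]; group
      _ = Tv ^ n * (R * T₂ ^ (-m)) * Ti ^ (-l) := by rw [h2]
      _ = (Tv ^ n * R) * (T₂ ^ (-m) * Ti ^ (-l)) := by group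
      _ = (R * Tv ^ n) * (T₂ ^ (-m) * Ti ^ (-l)) := by rw [sVR n]
      _ = R * (Tv ^ n * T₂ ^ (-m) * Ti ^ (-l)) := by group
  -- closure induction
  refine Subgroup.closure_induction ?_ ?_ ?_ ?_ hγ
  · intro x hx
    simp only [Set.mem_insert_iff, Set.mem_singleton_iff] at hx
    rcases hx with rfl | rfl | rfl | rfl
    · exact ⟨1, 0, 0, 0, by norm_num, by simp⟩
    · exact ⟨0, 0, 1, 0, by norm_num, by simp⟩
    · exact ⟨0, 1, 0, 0, by norm_num, by simp⟩
    · exact ⟨0, 0, 0, 1, by norm_num, by simp⟩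
  · exact ⟨0, 0, 0, 0, by norm_num, by simp⟩
  · rintro x y _ _ ⟨m, n, l, p, hp, rfl⟩ ⟨m', n', l', q, hq, rfl⟩
    interval_cases q
    · refine ⟨m + m', n + n' + 4 * (m' * l), l + l', p, hp, ?_⟩
      have hcb := combine n m l n' m' l'
      calc R ^ p * Tv ^ n * T₂ ^ m * Ti ^ l * (R ^ 0 * Tv ^ n' * T₂ ^ m' * Ti ^ l')
          = R ^ p * ((Tv ^ n * T₂ ^ m * Ti ^ l) * (Tv ^ n' * T₂ ^ m' * Ti ^ l')) := by
            rw [pow_zero]; group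
        _ = R ^ p * (Tv ^ (n + n' + 4 * (m' * l)) * T₂ ^ (m + m') * Ti ^ (l + l')) := by
            rw [hcb]
        _ = R ^ p * Tv ^ (n + n' + 4 * (m' * l)) * T₂ ^ (m + m') * Ti ^ (l + l') := by group
    · have step : ∀ c : ℤ, R ^ p * Tv ^ n * T₂ ^ m * Ti ^ l *
          (R ^ 1 * Tv ^ n' * T₂ ^ m' * Ti ^ l') =
          (R ^ p * R) * ((Tv ^ n * T₂ ^ (-m) * Ti ^ (-l)) * (Tv ^ n' * T₂ ^ m' * Ti ^ l')) := by
        intro _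
        calc R ^ p * Tv ^ n * T₂ ^ m * Ti ^ l * (R ^ 1 * Tv ^ n' * T₂ ^ m' * Ti ^ l')
            = R ^ p * (Tv ^ n * T₂ ^ m * Ti ^ l * R) * (Tv ^ n' * T₂ ^ m' * Ti ^ l') := by
              rw [pow_one]; group
          _ = R ^ p * (R * (Tv ^ n * T₂ ^ (-m) * Ti ^ (-l))) * (Tv ^ n' * T₂ ^ m' * Ti ^ l') := by
              rw [moveR n m l]
          _ = (R ^ p * R) * ((Tv ^ n * T₂ ^ (-m) * Ti ^ (-l)) * (Tv ^ n' * T₂ ^ m' * Ti ^ l')) := by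
              group
      have hcb := combine n (-m) (-l) n' m' l'
      interval_cases p
      · refine ⟨-m + m', n + n' + 4 * (m' * -l), -l + l', 1, le_refl 1, ?_⟩
        rw [step 0, hcb, pow_zero, one_mul, pow_one]
        group
      · refine ⟨-m + m', n + n' + 4 * (m' * -l), -l + l', 0, by norm_num, ?_⟩
        rw [step 0, hcb, pow_one, e1, one_mul, pow_zero, one_mul]
  · rintro x _ ⟨m, n, l, p, hp, rfl⟩
    have reorder : ∀ l₀ m₀ n₀ : ℤ, Ti ^ l₀ * T₂ ^ m₀ * Tv ^ n₀ =
        Tv ^ (0 + n₀ + 4 * (m₀ * l₀)) * T₂ ^ (0 + m₀) * Ti ^ (l₀ + 0) := by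
      intro l₀ m₀ n₀
      have := combine 0 0 l₀ n₀ m₀ 0
      calc Ti ^ l₀ * T₂ ^ m₀ * Tv ^ n₀
          = Ti ^ l₀ * (T₂ ^ m₀ * Tv ^ n₀) := by group
        _ = Ti ^ l₀ * (Tv ^ n₀ * T₂ ^ m₀) := by rw [sVT n₀ m₀]
        _ = (Tv ^ (0:ℤ) * T₂ ^ (0:ℤ) * Ti ^ l₀) * (Tv ^ n₀ * T₂ ^ m₀ * Ti ^ (0:ℤ)) := by
            simp only [zpow_zero, one_mul, mul_one]
        _ = Tv ^ (0 + n₀ + 4 * (m₀ * l₀)) * T₂ ^ (0 + m₀) * Ti ^ (l₀ + 0) := this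
    interval_cases p
    · refine ⟨0 + -m, 0 + -n + 4 * (-m * -l), -l + 0, 0, by norm_num, ?_⟩
      have hre := reorder (-l) (-m) (-n)
      calc (R ^ 0 * Tv ^ n * T₂ ^ m * Ti ^ l)⁻¹
          = Ti ^ (-l) * T₂ ^ (-m) * Tv ^ (-n) := by rw [pow_zero]; group
        _ = Tv ^ (0 + -n + 4 * (-m * -l)) * T₂ ^ (0 + -m) * Ti ^ (-l + 0) := hre
        _ = R ^ 0 * Tv ^ (0 + -n + 4 * (-m * -l)) * T₂ ^ (0 + -m) * Ti ^ (-l + 0) := by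
            rw [pow_zero]; group
    · refine ⟨0 + m, 0 + -n + 4 * (m * l), l + 0, 1, le_refl 1, ?_⟩
      have hre := reorder l m (-n)
      have hm : T₂ ^ (-m) * R = R * T₂ ^ m := by rw [hRT2 m]
      have hl : Ti ^ (-l) * R = R * Ti ^ l := by rw [hRTI l]
      calc (R ^ 1 * Tv ^ n * T₂ ^ m * Ti ^ l)⁻¹
          = Ti ^ (-l) * T₂ ^ (-m) * Tv ^ (-n) * R⁻¹ := by rw [pow_one]; group
        _ = Ti ^ (-l) * T₂ ^ (-m) * Tv ^ (-n) * R := by rw [Rinv]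
        _ = Ti ^ (-l) * T₂ ^ (-m) * (Tv ^ (-n) * R) := by group
        _ = Ti ^ (-l) * (T₂ ^ (-m) * R) * Tv ^ (-n) := by rw [sVR (-n)]; group
        _ = (Ti ^ (-l) * R) * T₂ ^ m * Tv ^ (-n) := by rw [hm]; group
        _ = R * (Ti ^ l * T₂ ^ m * Tv ^ (-n)) := by rw [hl]; group
        _ = R * (Tv ^ (0 + -n + 4 * (m * l)) * T₂ ^ (0 + m) * Ti ^ (l + 0)) := by rw [hre]
        _ = R ^ 1 * Tv ^ (0 + -n + 4 * (m * l)) * T₂ ^ (0 + m) * Ti ^ (l + 0) := by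
            rw [pow_one]; group
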